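/- Let (l_n) and (k_n) be sequences of positive integers such that (1 − 2^{−l_n})^{k_n} → 1 and k_n · l_n · 2^{−l_n} → ∞. Let h_n : {-1,1}^{[k_n]×[l_n]} → {−1,1} be any sequence of monotone increasing Boolean functions. Then there exists a sequence of monotone increasing Boolean functions g_n : {-1,1}^{[k_n]×[l_n]} → {−1,1} such that ℙ[g_n(ω) ≠ h_n(ω)] → 0 as n → ∞ (with ω uniform), and there exists a sequence of positive integers a_n → ∞ with ℙ[|𝒫(g_n, ω)| > a_n] → 1 as n → ∞. -/

import Mathlib

open Finset Filter

attribute [local instance] Classical.propDecidable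

/-- The discrete hypercube indexed by `ι`: `true` encodes `+1`, `false` encodes `-1`
(so the pointwise `Bool` order, with `false < true`, is the coordinatewise partial
order on `{-1,1}^ι` with `-1 < 1`). -/
abbrev Cube (ι : Type) := ι → Bool

/-- `ω` with its `i`-th coordinate flipped. -/
def flipAt {ι : Type} [DecidableEq ι] (ω : Cube ι) (i : ι) : Cube ι :=
  fun j => if j = i then !ω j else ω j

/-- The pivotal set `𝒫(f, ω)`: coordinates whose flip changes the value of `f`. -/
noncomputable def pivSet {ι : Type} [DecidableEq ι] [Fintype ι] {β : Type}
    (f : Cube ι → β) (ω : Cube ι) : Finset ι :=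
  Finset.univ.filter fun i => f (flipAt ω i) ≠ f ω

/-- Probability of the event `p` under the uniform measure on the hypercube. -/
noncomputable def unifProb {ι : Type} [DecidableEq ι] [Fintype ι] (p : Cube ι → Prop) : ℝ :=
  ((Finset.univ.filter p).card : ℝ) / (Fintype.card (Cube ι) : ℝ)

/-- Expectation of `X` under the uniform measure on the hypercube. -/
noncomputable def unifExp {ι : Type} [DecidableEq ι] [Fintype ι] (X : Cube ι → ℝ) : ℝ :=
  (∑ ω : Cube ι, X ω) / (Fintype.card (Cube ι) : ℝ)

/-- Conditional expectation of `X` given the event `A`, under the uniform measure. -/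
noncomputable def condExpect {ι : Type} [DecidableEq ι] [Fintype ι]
    (X : Cube ι → ℝ) (A : Cube ι → Prop) : ℝ :=
  (∑ ω ∈ Finset.univ.filter A, X ω) / ((Finset.univ.filter A).card : ℝ)

/-- `Tribes(l,k)` as a `{0,1}`-valued integer function on `{-1,1}^{[k]×[l]}`:
value `1` iff some tribe `t ∈ [k]` has all of its `l` bits equal to `+1` (`true`). -/
noncomputable def tribes (k l : ℕ) (ω : Cube (Fin k × Fin l)) : ℤ :=
  if ∃ t : Fin k, ∀ i : Fin l, ω (t, i) = true then 1 else 0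

/-- Coordinatewise negation `-ω`. -/
def negCube {ι : Type} (ω : Cube ι) : Cube ι := fun x => !ω x

/-- The number of pivotal tribes: tribes having exactly one `-1` (`false`) bit. -/
noncomputable def pivTribeCount (k l : ℕ) (ω : Cube (Fin k × Fin l)) : ℕ :=
  (Finset.univ.filter fun t : Fin k => ∃! i : Fin l, ω (t, i) = false).card

/-- Single-coordinate weight of the `ε`-noise joint distribution `ν_ε`. -/
noncomputable def noiseWeight (ε : ℝ) (b b' : Bool) : ℝ :=
  if b = b' then (1 - ε / 2) / 2 else ε / 4

/-- Probability of the event `E` under the `ε`-noise joint distribution `ν_ε`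
(the product over coordinates of the single-coordinate weights). -/
noncomputable def noiseProb {ι : Type} [DecidableEq ι] [Fintype ι] (ε : ℝ)
    (E : Cube ι → Cube ι → Prop) : ℝ :=
  ∑ ω : Cube ι, ∑ ω' : Cube ι,
    if E ω ω' then ∏ i : ι, noiseWeight ε (ω i) (ω' i) else 0

/-- `f` is transitive: it is invariant under some subgroup of permutations of the
coordinate set acting transitively, where `(σ · ω) x = ω (σ⁻¹ x)`. -/
def TransitiveInvariant {ι : Type} {β : Type} (f : Cube ι → β) : Prop :=
  ∃ G : Subgroup (Equiv.Perm ι),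
    (∀ x y : ι, ∃ σ ∈ G, σ x = y) ∧
    ∀ σ ∈ G, ∀ ω : Cube ι, f (fun x => ω (σ⁻¹ x)) = f ω

section basic
variable {ι : Type} [DecidableEq ι] [Fintype ι]

lemma filter_inst {α : Type*} {p : α → Prop} (h1 h2 : DecidablePred p) (s : Finset α) :
    @Finset.filter α p h1 s = @Finset.filter α p h2 s :=
  @Finset.filter_congr α p p h1 h2 s (fun _ _ => Iff.rfl)

lemma cube_card_pos : 0 < ((Fintype.card (Cube ι) : ℝ)) := by
  exact_mod_cast Fintype.card_pos

lemma unifProb_nonneg (p : Cube ι → Prop) : 0 ≤ unifProb p :=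
  div_nonneg (by positivity) (le_of_lt cube_card_pos)

lemma unifProb_mono {p q : Cube ι → Prop} (h : ∀ ω, p ω → q ω) : unifProb p ≤ unifProb q := by
  rw [unifProb, unifProb, div_le_div_iff_of_pos_right cube_card_pos]
  have hcard : (Finset.univ.filter p).card ≤ (Finset.univ.filter q).card := by
    apply Finset.card_le_card
    intro ω hω
    simp only [Finset.mem_filter, Finset.mem_univ, true_and] at *
    exact h ω hω
  exact_mod_cast hcard

lemma unifProb_le_one (p : Cube ι → Prop) : unifProb p ≤ 1 := by
  rw [unifProb, div_le_one cube_card_pos]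
  exact_mod_cast (Finset.card_filter_le _ _).trans_eq (Finset.card_univ)

lemma unifProb_le_add {p q r : Cube ι → Prop} (h : ∀ ω, p ω → q ω ∨ r ω) :
    unifProb p ≤ unifProb q + unifProb r := by
  rw [unifProb, unifProb, unifProb, ← add_div, div_le_div_iff_of_pos_right cube_card_pos]
  have hsub : (Finset.univ.filter p) ⊆
      (Finset.univ.filter q) ∪ (Finset.univ.filter r) := by
    intro ω hω
    simp only [Finset.mem_filter, Finset.mem_union, Finset.mem_univ, true_and] at *
    exact h ω hω
  have h1 := (Finset.card_le_card hsub).trans (Finset.card_union_le _ _)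
  exact_mod_cast h1

lemma unifProb_not (p : Cube ι → Prop) : unifProb (fun ω => ¬ p ω) = 1 - unifProb p := by
  rw [eq_sub_iff_add_eq, unifProb, unifProb, ← add_div,
    div_eq_one_iff_eq (ne_of_gt cube_card_pos)]
  have h := Finset.card_filter_add_card_filter_not
    (s := (Finset.univ : Finset (Cube ι))) (p := p)
  rw [Finset.card_univ] at h
  rw [filter_inst (fun ω => Classical.propDecidable (¬ p ω)) (fun a => instDecidableNot)]
  push_cast [← h]
  ring
end basic

section counting
variable {k l : ℕ}

lemma count_prod (S : Fin k → Finset (Fin l → Bool))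
    {inst : DecidablePred fun ω : Cube (Fin k × Fin l) => ∀ t, (fun i => ω (t,i)) ∈ S t} :
    (@Finset.filter _ _ inst Finset.univ).card = ∏ t, (S t).card := by
  rw [← Fintype.card_piFinset]
  apply Finset.card_bij' (fun ω _ => fun t i => ω (t,i)) (fun f _ => fun x => f x.1 x.2)
  case hi =>
    intro ω hω
    simp only [Finset.mem_filter, Finset.mem_univ, true_and] at hω
    rw [Fintype.mem_piFinset]
    exact hω
  case hj =>
    intro f hf
    simp only [Finset.mem_filter, Finset.mem_univ, true_and]
    rw [Fintype.mem_piFinset] at hf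
    exact hf
  case left_inv => intro ω _; rfl
  case right_inv => intro f _; rfl

lemma card_cube : (Fintype.card (Cube (Fin k × Fin l)) : ℝ) = (2^l : ℝ)^k := by
  rw [Fintype.card_fun]
  push_cast
  rw [← pow_mul]
  simp [Fintype.card_prod, mul_comm]

lemma unifProb_prod (S : Fin k → Finset (Fin l → Bool)) :
    unifProb (fun ω : Cube (Fin k × Fin l) => ∀ t, (fun i => ω (t,i)) ∈ S t)
      = ∏ t, ((S t).card : ℝ) / (2^l : ℝ) := by
  rw [unifProb, count_prod, card_cube]
  rw [Finset.prod_div_distrib]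
  push_cast
  congr 1
  rw [Finset.prod_const, Finset.card_univ, Fintype.card_fin]
end counting

section cardY
variable {l : ℕ}

lemma cardY : (Finset.univ : Finset (Fin l → Bool)).card = 2^l := by
  simp [Finset.card_univ]

lemma card_uniqueFalse {inst : DecidablePred fun y : Fin l → Bool => ∃! i, y i = false} :
    (@Finset.filter _ _ inst Finset.univ).card = l := by
  have key : (Finset.univ : Finset (Fin l)).card = (@Finset.filter _ _ inst Finset.univ).card := by
    apply Finset.card_bij (fun i _ => fun j => decide (j ≠ i))
    case hi =>
      intro i _
      simp only [Finset.mem_filter, Finset.mem_univ, true_and]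
      refine ⟨i, by simp, ?_⟩
      intro j hj
      by_contra hne
      simp [hne] at hj
    case i_inj =>
      intro i _ i' _ hfe
      by_contra hne
      have := congrFun hfe i
      simp [Ne.symm hne] at this
      exact hne this
    case i_surj =>
      intro y hy
      simp only [Finset.mem_filter, Finset.mem_univ, true_and] at hy
      obtain ⟨i, hi, huniq⟩ := hy
      refine ⟨i, Finset.mem_univ i, ?_⟩
      funext j
      by_cases hji : j = i
      · subst hji; simp [hi]
      · simp only [hji, decide_not]
        simp [hji]
        cases hyj : y j
        · exact absurd (huniq j hyj) hji
        · rfl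
  rw [← key, Finset.card_univ, Fintype.card_fin]
end cardY

section cardY2
variable {l : ℕ}


lemma card_exists_false {inst : DecidablePred fun y : Fin l → Bool => ∃ i, y i = false} :
    ((@Finset.filter _ _ inst Finset.univ).card : ℝ) = 2^l - 1 := by
  have h := Finset.card_filter_add_card_filter_not
    (s := (Finset.univ : Finset (Fin l → Bool))) (p := fun y => ∃ i, y i = false)
  have hc : (Finset.univ.filter fun y : Fin l → Bool => ¬ ∃ i, y i = false) = {fun _ => true} := by
    ext y
    simp only [Finset.mem_filter, Finset.mem_univ, true_and, Finset.mem_singleton]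
    constructor
    · intro hy
      funext i
      cases hi : y i
      · exact absurd ⟨i, hi⟩ hy
      · rfl
    · rintro rfl
      simp
  rw [filter_inst _ (fun a => Classical.propDecidable _), hc, cardY] at h
  rw [filter_inst inst (fun a => Classical.propDecidable _)]
  have := congrArg (Nat.cast : ℕ → ℝ) h
  rw [Finset.card_singleton] at this
  push_cast at this
  linarith

lemma card_not_uniqueFalse {inst : DecidablePred fun y : Fin l → Bool => ¬ ∃! i, y i = false} :
    ((@Finset.filter _ _ inst Finset.univ).card : ℝ) = 2^l - l := by
  have h := Finset.card_filter_add_card_filter_not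
    (s := (Finset.univ : Finset (Fin l → Bool))) (p := fun y => ∃! i, y i = false)
  rw [filter_inst _ (fun a => Classical.propDecidable _), card_uniqueFalse, cardY,
    filter_inst _ inst] at h
  have := congrArg (Nat.cast : ℕ → ℝ) h
  push_cast at this
  linarith
end cardY2

section probs
variable {ι : Type} [DecidableEq ι] [Fintype ι]

lemma unifProb_congr {p q : Cube ι → Prop} (h : ∀ ω, p ω ↔ q ω) : unifProb p = unifProb q := by
  unfold unifProb
  rw [Finset.filter_congr (fun ω _ => h ω)]

lemma unifProb_comp_neg (p : Cube ι → Prop) :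
    unifProb (fun ω => p (negCube ω)) = unifProb p := by
  unfold unifProb
  have key : (Finset.univ.filter fun ω => p (negCube ω)).card = (Finset.univ.filter p).card := by
    apply Finset.card_bij' (fun ω _ => negCube ω) (fun ω _ => negCube ω)
    case hi =>
      intro ω hω
      simp only [Finset.mem_filter, Finset.mem_univ, true_and] at *
      exact hω
    case hj =>
      intro ω hω
      simp only [Finset.mem_filter, Finset.mem_univ, true_and] at *
      have h2 : negCube (negCube ω) = ω := by funext x; simp [negCube]
      rw [h2]
      exact hω
    case left_inv => intro ω _; funext x; simp [negCube]
    case right_inv => intro ω _; funext x; simp [negCube]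
  rw [key]
end probs

section events
variable {k l : ℕ}

lemma unifProb_noT :
    unifProb (fun ω : Cube (Fin k × Fin l) => ∀ t, ∃ i, ω (t,i) = false)
      = (((2^l : ℝ) - 1)/2^l)^k := by
  have hcongr : ∀ ω : Cube (Fin k × Fin l),
      (∀ t, ∃ i, ω (t,i) = false) ↔
      (∀ t, (fun i => ω (t,i)) ∈ (Finset.univ.filter fun y : Fin l → Bool => ∃ i, y i = false)) := by
    intro ω
    simp only [Finset.mem_filter, Finset.mem_univ, true_and]
  rw [unifProb_congr hcongr, unifProb_prod]
  rw [Finset.prod_congr rfl (fun t _ => by rw [card_exists_false]), Finset.prod_const,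
    Finset.card_univ, Fintype.card_fin]

lemma unifProb_T :
    unifProb (fun ω : Cube (Fin k × Fin l) => ∃ t, ∀ i, ω (t,i) = true)
      = 1 - (1 - (1/2 : ℝ)^l)^k := by
  have hcongr : ∀ ω : Cube (Fin k × Fin l),
      (∃ t, ∀ i, ω (t,i) = true) ↔ ¬ (∀ t, ∃ i, ω (t,i) = false) := by
    intro ω
    push_neg
    constructor
    · rintro ⟨t, ht⟩
      exact ⟨t, fun i => by simp [ht i]⟩
    · rintro ⟨t, ht⟩
      exact ⟨t, fun i => by have := ht i; revert this; cases ω (t,i) <;> simp⟩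
  rw [unifProb_congr hcongr, unifProb_not, unifProb_noT]
  have h2 : ((2:ℝ)^l - 1)/2^l = 1 - (1/2:ℝ)^l := by
    have : (2:ℝ)^l ≠ 0 := by positivity
    field_simp
    rw [mul_sub, mul_one, ← mul_pow]; norm_num
  rw [h2]

lemma unifProb_F :
    unifProb (fun ω : Cube (Fin k × Fin l) => ∃ t, ∀ i, ω (t,i) = false)
      = 1 - (1 - (1/2 : ℝ)^l)^k := by
  have hcongr : ∀ ω : Cube (Fin k × Fin l),
      (∃ t, ∀ i, ω (t,i) = false) ↔ (∃ t, ∀ i, (negCube ω) (t,i) = true) := by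
    intro ω
    unfold negCube
    constructor
    · rintro ⟨t, ht⟩; exact ⟨t, fun i => by simp [ht i]⟩
    · rintro ⟨t, ht⟩
      refine ⟨t, fun i => ?_⟩
      have := ht i
      revert this; cases ω (t,i) <;> simp
  rw [unifProb_congr hcongr]
  exact (unifProb_comp_neg (fun ω' : Cube (Fin k × Fin l) =>
    ∃ t, ∀ i, ω' (t,i) = true)).trans unifProb_T

lemma filter_false_card {α : Type*} [Fintype α] {p : α → Prop} {inst : DecidablePred p}
    (h : ∀ a, ¬ p a) : (@Finset.filter α p inst Finset.univ).card = 0 := by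
  rw [Finset.card_eq_zero]
  exact Finset.filter_eq_empty_iff.mpr (fun x _ => h x)

lemma unifProb_exists_le {ι : Type} [DecidableEq ι] [Fintype ι] {γ : Type}
    (s : Finset γ) (bad : γ → Cube ι → Prop) :
    unifProb (fun ω => ∃ g ∈ s, bad g ω) ≤ ∑ g ∈ s, unifProb (bad g) := by
  classical
  induction s using Finset.induction_on with
  | empty =>
      rw [Finset.sum_empty, unifProb, filter_false_card (by simp)]
      simp
  | insert a s' hnot ih =>
      rw [Finset.sum_insert hnot]
      have hcongr : ∀ ω : Cube ι, (∃ g ∈ insert a s', bad g ω) ↔ (bad a ω ∨ ∃ g ∈ s', bad g ω) := by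
        intro ω
        simp [Finset.mem_insert, or_and_right, exists_or]
      rw [unifProb_congr hcongr]
      exact le_trans (unifProb_le_add (fun ω hw => hw)) (by linarith [ih])

lemma tail_bound {G : ℕ} (hG : 0 < G) :
    unifProb (fun ω : Cube (Fin k × Fin l) => pivTribeCount k l ω < G)
      ≤ G * (((2^l : ℝ) - l)/2^l)^(k / G) := by
  have hp2 : (0:ℝ) < 2^l := by positivity
  have hl2 : (l : ℝ) ≤ 2^l := by exact_mod_cast (Nat.lt_two_pow_self (n := l)).le
  set q : ℝ := ((2^l : ℝ) - l)/2^l with hqdef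
  have hq0 : 0 ≤ q := div_nonneg (by linarith) hp2.le
  have hq1 : q ≤ 1 := by rw [hqdef, div_le_one hp2]; linarith
  set s := k / G with hsdef
  rcases Nat.eq_zero_or_pos s with hs0 | hs1
  · rw [hs0, pow_zero, mul_one]
    exact le_trans (unifProb_le_one _) (by exact_mod_cast hG)
  have hk0 : 0 < k := lt_of_lt_of_le hs1 (Nat.div_le_self k G)
  -- inclusion into union of bad events
  have hincl : ∀ ω : Cube (Fin k × Fin l), pivTribeCount k l ω < G →
      ∃ g ∈ Finset.range G, ∀ t : Fin k, t.val / s = g → ¬ ∃! i, ω (t,i) = false := by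
    intro ω hω
    by_contra hcon
    push_neg at hcon
    have : Inhabited (Fin k) := ⟨⟨0, hk0⟩⟩
    choose! w hw1 hw2 using hcon
    have hle : G ≤ pivTribeCount k l ω := by
      unfold pivTribeCount
      rw [← Finset.card_range G]
      apply Finset.card_le_card_of_injOn w
      · intro g hg
        simp only [Finset.mem_coe, Finset.mem_filter, Finset.mem_univ, true_and]
        exact hw2 g hg
      · intro g hg g' hg' heq
        rw [← hw1 g hg, ← hw1 g' hg', heq]
    omega
  refine le_trans (unifProb_mono hincl) (le_trans (unifProb_exists_le _ _) ?_)
  have hbound : ∀ g ∈ Finset.range G,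
      unifProb (fun ω : Cube (Fin k × Fin l) =>
        ∀ t : Fin k, t.val / s = g → ¬ ∃! i, ω (t,i) = false) ≤ q ^ s := by
    intro g hg
    rw [Finset.mem_range] at hg
    set S : Fin k → Finset (Fin l → Bool) := fun t =>
      if t.val / s = g then (Finset.univ.filter fun y : Fin l → Bool => ¬ ∃! i, y i = false)
      else Finset.univ with hSdef
    have hcongr : ∀ ω : Cube (Fin k × Fin l),
        (∀ t : Fin k, t.val / s = g → ¬ ∃! i, ω (t,i) = false) ↔
        (∀ t, (fun i => ω (t,i)) ∈ S t) := by
      intro ω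
      constructor
      · intro hω t
        rw [hSdef]
        by_cases ht : t.val / s = g
        · simp only [ht, if_true, Finset.mem_filter, Finset.mem_univ, true_and]
          exact hω t ht
        · simp [ht]
      · intro hω t ht
        have := hω t
        rw [hSdef] at this
        simp only [ht, if_true, Finset.mem_filter, Finset.mem_univ, true_and] at this
        exact this
    rw [unifProb_congr hcongr, unifProb_prod]
    have hfac : ∀ t : Fin k, ((S t).card : ℝ) / 2^l = if t.val / s = g then q else 1 := by
      intro t
      rw [hSdef]
      by_cases ht : t.val / s = g
      · simp only [ht, if_true]
        rw [card_not_uniqueFalse]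
      · simp only [ht, if_false]
        rw [cardY]
        push_cast
        exact div_self hp2.ne'
    rw [Finset.prod_congr rfl (fun t _ => hfac t)]
    rw [Finset.prod_ite, Finset.prod_const, Finset.prod_const, one_pow, mul_one]
    apply pow_le_pow_of_le_one hq0 hq1
    -- s ≤ number of tribes in group g
    refine le_trans (le_of_eq (Finset.card_range s).symm) ?_
    have hlt : ∀ j, j < s → g * s + j < k := by
      intro j hj
      have h1 : (g+1)*s = g*s + s := by ring
      have h2 : (g+1)*s ≤ G * s := Nat.mul_le_mul_right s (by omega)
      have h3 : G * s ≤ k := by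
        rw [hsdef, mul_comm]
        exact Nat.div_mul_le_self k G
      omega
    apply Finset.card_le_card_of_injOn
      (fun j => (⟨(g * s + j) % k, Nat.mod_lt _ hk0⟩ : Fin k))
    · intro j hj
      rw [Finset.mem_coe, Finset.mem_range] at hj
      simp only [Finset.mem_coe, Finset.mem_filter, Finset.mem_univ, true_and]
      show ((g * s + j) % k) / s = g
      rw [Nat.mod_eq_of_lt (hlt j hj)]
      rw [Nat.mul_comm g s, Nat.mul_add_div hs1, Nat.div_eq_of_lt hj]
      omega
    · intro j hj j' hj' heq
      rw [Finset.mem_coe, Finset.mem_range] at hj hj'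
      have := congrArg Fin.val heq
      simp only [Nat.mod_eq_of_lt (hlt j hj), Nat.mod_eq_of_lt (hlt j' hj')] at this
      omega
  calc ∑ g ∈ Finset.range G, unifProb (fun ω : Cube (Fin k × Fin l) =>
        ∀ t : Fin k, t.val / s = g → ¬ ∃! i, ω (t,i) = false)
      ≤ ∑ _g ∈ Finset.range G, q ^ s := Finset.sum_le_sum hbound
    _ = G * q ^ s := by rw [Finset.sum_const, Finset.card_range, nsmul_eq_mul]
end events

section gdef
variable {k l : ℕ}

noncomputable def gfun (h : Cube (Fin k × Fin l) → Bool) (ω : Cube (Fin k × Fin l)) : Bool :=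
  (h ω || decide (∃ t, ∀ i, ω (t,i) = true)) && !decide (∃ t, ∀ i, ω (t,i) = false)

lemma gfun_mono {h : Cube (Fin k × Fin l) → Bool} (hm : Monotone h) : Monotone (gfun h) := by
  intro ω ω' hle
  rw [Bool.le_iff_imp]
  intro hg
  unfold gfun at *
  simp only [Bool.and_eq_true, Bool.or_eq_true, Bool.not_eq_true', decide_eq_true_eq,
    decide_eq_false_iff_not] at *
  obtain ⟨hor, hnF⟩ := hg
  constructor
  · rcases hor with hh | hT
    · exact Or.inl (Bool.le_iff_imp.mp (hm hle) hh)
    · obtain ⟨t, ht⟩ := hT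
      exact Or.inr ⟨t, fun i => Bool.le_iff_imp.mp (hle (t, i)) (ht i)⟩
  · rintro ⟨t, ht⟩
    apply hnF
    refine ⟨t, fun i => ?_⟩
    have hx := hle (t, i)
    rw [ht i] at hx
    cases hc : ω (t,i)
    · rfl
    · rw [hc] at hx; exact absurd hx (by simp)

lemma gfun_eq {h : Cube (Fin k × Fin l) → Bool} {ω : Cube (Fin k × Fin l)}
    (hT : ¬ ∃ t, ∀ i, ω (t,i) = true) (hF : ¬ ∃ t, ∀ i, ω (t,i) = false) :
    gfun h ω = h ω := by
  unfold gfun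
  rw [decide_eq_false_iff_not.mpr hT, decide_eq_false_iff_not.mpr hF]
  simp

lemma piv_lower (hl : 0 < l) {h : Cube (Fin k × Fin l) → Bool} {ω : Cube (Fin k × Fin l)} {a : ℕ}
    (hF : ¬ ∃ t, ∀ i, ω (t,i) = false)
    (h1 : a < pivTribeCount k l ω) (h2 : a < pivTribeCount k l (negCube ω)) :
    a < (pivSet (gfun h) ω).card := by
  have hdflt : Fin l := ⟨0, hl⟩
  by_cases hg : gfun h ω = true
  · -- g is true at ω: flipping the unique true bit of a dual-pivotal tribe kills it
    refine lt_of_lt_of_le h2 ?_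
    unfold pivTribeCount pivSet
    set idx : Fin k → Fin l := fun t =>
      if hp : ∃! i : Fin l, (negCube ω) (t, i) = false then hp.choose else hdflt with hidx
    apply Finset.card_le_card_of_injOn (fun t => (t, idx t))
    · intro t ht
      simp only [Finset.mem_coe, Finset.mem_filter, Finset.mem_univ, true_and] at ht ⊢
      simp only [hidx, dif_pos ht]
      set i0 := ht.choose with hi0
      have hspec := ht.choose_spec
      have htrue : ω (t, i0) = true := by
        have := hspec.1
        unfold negCube at this
        revert this; change (!ω (t, i0)) = false → _; cases ω (t, i0) <;> simp
      have hothers : ∀ i, i ≠ i0 → ω (t, i) = false := by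
        intro i hi
        by_contra hc
        have : ω (t,i) = true := by revert hc; cases ω (t,i) <;> simp
        have : (negCube ω) (t,i) = false := by unfold negCube; simp [this]
        exact hi (hspec.2 i this)
      -- flipping (t,i0) makes tribe t all false
      have hFflip : ∃ t', ∀ i, (flipAt ω (t, i0)) (t', i) = false := by
        refine ⟨t, fun i => ?_⟩
        unfold flipAt
        by_cases hii : i = i0
        · subst hii; simp [htrue]
        · have hne : ((t,i) : Fin k × Fin l) ≠ (t, i0) := by
            simp [Prod.ext_iff, hii]
          simp only [hne, if_false]
          exact hothers i hii
      intro heq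
      rw [hg] at heq
      unfold gfun at heq
      rw [decide_eq_true_iff.mpr hFflip] at heq
      simp at heq
    · intro t _ t' _ heq
      exact (Prod.ext_iff.mp heq).1
  · -- g is false at ω: flipping the unique false bit of a pivotal tribe turns it on
    have hgf : gfun h ω = false := by revert hg; cases gfun h ω <;> simp
    refine lt_of_lt_of_le h1 ?_
    unfold pivTribeCount pivSet
    set idx : Fin k → Fin l := fun t =>
      if hp : ∃! i : Fin l, ω (t, i) = false then hp.choose else hdflt with hidx
    apply Finset.card_le_card_of_injOn (fun t => (t, idx t))
    · intro t ht
      simp only [Finset.mem_coe, Finset.mem_filter, Finset.mem_univ, true_and] at ht ⊢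
      simp only [hidx, dif_pos ht]
      set i0 := ht.choose with hi0
      have hfalse : ω (t, i0) = false := ht.choose_spec.1
      have hothers : ∀ i, i ≠ i0 → ω (t, i) = true := by
        intro i hi
        by_contra hc
        have : ω (t,i) = false := by revert hc; cases ω (t,i) <;> simp
        exact hi (ht.choose_spec.2 i this)
      have hTflip : ∃ t', ∀ i, (flipAt ω (t, i0)) (t', i) = true := by
        refine ⟨t, fun i => ?_⟩
        unfold flipAt
        by_cases hii : i = i0
        · subst hii; simp [hfalse]
        · have hne : ((t,i) : Fin k × Fin l) ≠ (t, i0) := by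
            simp [Prod.ext_iff, hii]
          simp only [hne, if_false]
          exact hothers i hii
      have hFflip : ¬ ∃ t', ∀ i, (flipAt ω (t, i0)) (t', i) = false := by
        rintro ⟨t', ht'⟩
        by_cases htt : t' = t
        · subst htt
          have := ht' i0
          unfold flipAt at this
          simp [hfalse] at this
        · apply hF
          refine ⟨t', fun i => ?_⟩
          have := ht' i
          unfold flipAt at this
          have hne : ((t',i) : Fin k × Fin l) ≠ (t, i0) := by
            simp [Prod.ext_iff, htt]
          rwa [if_neg hne] at this
      intro heq
      rw [hgf] at heq
      unfold gfun at heq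
      rw [decide_eq_true_iff.mpr hTflip, decide_eq_false_iff_not.mpr hFflip] at heq
      simp at heq
    · intro t _ t' _ heq
      exact (Prod.ext_iff.mp heq).1

end gdef

lemma nat_sqrt_tendsto : Tendsto Nat.sqrt atTop atTop := by
  apply tendsto_atTop_atTop_of_monotone (fun a b hab => Nat.sqrt_le_sqrt hab)
  intro b
  exact ⟨b^2, ge_of_eq (Nat.sqrt_eq' b)⟩

lemma real_sqrt_tendsto : Tendsto Real.sqrt atTop atTop := by
  apply tendsto_atTop_atTop_of_monotone (fun x y hxy => Real.sqrt_le_sqrt hxy)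
  intro b
  exact ⟨(max b 0)^2, by rw [Real.sqrt_sq (le_max_right b 0)]; exact le_max_left _ _⟩

lemma tendsto_four_div_sqrt : Tendsto (fun x : ℝ => 4 / Real.sqrt x) atTop (nhds 0) := by
  have h := real_sqrt_tendsto.inv_tendsto_atTop
  have := h.const_mul (4:ℝ)
  simpa [div_eq_mul_inv, Function.comp] using this

theorem stmt17' (l k : ℕ → ℕ) (hl : ∀ n, 0 < l n) (hk : ∀ n, 0 < k n)
    (h1 : Tendsto (fun n => (1 - (1 / 2 : ℝ) ^ l n) ^ k n) atTop (nhds 1))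
    (h2 : Tendsto (fun n => (k n : ℝ) * (l n : ℝ) * (1 / 2 : ℝ) ^ l n) atTop atTop)
    (h : (n : ℕ) → Cube (Fin (k n) × Fin (l n)) → Bool)
    (hmono : ∀ n, Monotone (h n)) :
    ∃ g : (n : ℕ) → Cube (Fin (k n) × Fin (l n)) → Bool,
      (∀ n, Monotone (g n)) ∧
      Tendsto (fun n =>
          unifProb (fun ω : Cube (Fin (k n) × Fin (l n)) => g n ω ≠ h n ω))
        atTop (nhds 0) ∧
      ∃ a : ℕ → ℕ, (∀ n, 0 < a n) ∧ Tendsto a atTop atTop ∧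
        Tendsto (fun n =>
            unifProb (fun ω : Cube (Fin (k n) × Fin (l n)) =>
              a n < (pivSet (g n) ω).card))
          atTop (nhds 1) := by
  -- abbreviations
  set c : ℕ → ℝ := fun n => (k n : ℝ) * (l n : ℝ) * (1 / 2 : ℝ) ^ l n with hcdef
  have hc_pos : ∀ n, 0 < c n := by
    intro n
    have := hl n; have := hk n
    rw [hcdef]
    positivity
  refine ⟨fun n => gfun (h n), fun n => gfun_mono (hmono n), ?_, ?_⟩
  · -- closeness
    have hbound : ∀ n, unifProb (fun ω : Cube (Fin (k n) × Fin (l n)) => gfun (h n) ω ≠ h n ω)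
        ≤ 2 * (1 - (1 - (1/2 : ℝ)^(l n))^(k n)) := by
      intro n
      have hstep : ∀ ω : Cube (Fin (k n) × Fin (l n)), gfun (h n) ω ≠ h n ω →
          (∃ t, ∀ i, ω (t,i) = true) ∨ (∃ t, ∀ i, ω (t,i) = false) := by
        intro ω hne
        by_contra hcon
        rw [not_or] at hcon
        exact hne (gfun_eq hcon.1 hcon.2)
      refine le_trans (unifProb_le_add hstep) ?_
      rw [unifProb_T, unifProb_F]
      ring_nf
      exact le_refl _
    have hlim : Tendsto (fun n => 2 * (1 - (1 - (1/2 : ℝ)^(l n))^(k n))) atTop (nhds 0) := by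
      have := (tendsto_const_nhds (x := (1:ℝ)) (f := atTop)).sub h1
      rw [sub_self] at this
      have := this.const_mul (2:ℝ)
      simpa using this
    exact squeeze_zero (fun n => unifProb_nonneg _) hbound hlim
  · -- pivotal count
    set a : ℕ → ℕ := fun n => max (Nat.sqrt (Nat.sqrt ⌊c n⌋₊)) 1 with hadef
    have ha_pos : ∀ n, 0 < a n := fun n => lt_of_lt_of_le one_pos (le_max_right _ _)
    have ha_top : Tendsto a atTop atTop := by
      apply tendsto_atTop_mono (fun n => le_max_left (Nat.sqrt (Nat.sqrt ⌊c n⌋₊)) 1)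
      exact (nat_sqrt_tendsto.comp (nat_sqrt_tendsto.comp (tendsto_nat_floor_atTop.comp h2)))
    refine ⟨a, ha_pos, ha_top, ?_⟩
    -- complement probability tends to zero
    have key : ∀ n, unifProb (fun ω : Cube (Fin (k n) × Fin (l n)) =>
          ¬ (a n < (pivSet (gfun (h n)) ω).card))
        ≤ (1 - (1 - (1/2 : ℝ)^(l n))^(k n))
          + (2 * ((a n + 1 : ℕ) * (((2^(l n) : ℝ) - (l n))/2^(l n))^(k n / (a n + 1)))) := by
      intro n
      have hstep : ∀ ω : Cube (Fin (k n) × Fin (l n)),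
          ¬ (a n < (pivSet (gfun (h n)) ω).card) →
          (∃ t, ∀ i, ω (t,i) = false) ∨
          ((pivTribeCount (k n) (l n) ω < a n + 1) ∨
            (pivTribeCount (k n) (l n) (negCube ω) < a n + 1)) := by
        intro ω hne
        by_contra hcon
        rw [not_or, not_or] at hcon
        obtain ⟨hF, hX, hXn⟩ := hcon
        rw [not_lt] at hX hXn
        exact hne (piv_lower (hl n) hF (by omega) (by omega))
      refine le_trans (unifProb_le_add hstep) ?_
      rw [unifProb_F]
      gcongr
      have hXn_eq : unifProb (fun ω : Cube (Fin (k n) × Fin (l n)) =>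
            pivTribeCount (k n) (l n) (negCube ω) < a n + 1)
          = unifProb (fun ω : Cube (Fin (k n) × Fin (l n)) =>
            pivTribeCount (k n) (l n) ω < a n + 1) :=
        unifProb_comp_neg (fun ω => pivTribeCount (k n) (l n) ω < a n + 1)
      have htail := tail_bound (k := k n) (l := l n) (G := a n + 1) (Nat.succ_pos _)
      refine le_trans (unifProb_le_add (fun ω hw => hw)) ?_
      rw [hXn_eq]
      push_cast
      push_cast at htail
      linarith
    -- the tail term tends to zero
    have htail0 : Tendsto (fun n =>
        ((a n + 1 : ℕ) : ℝ) * (((2^(l n) : ℝ) - (l n))/2^(l n))^(k n / (a n + 1))) atTop (nhds 0) := by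
      -- first, pointwise bound by G^2 / c
      have hptwise : ∀ n, ((a n + 1 : ℕ) : ℝ) * (((2^(l n) : ℝ) - (l n))/2^(l n))^(k n / (a n + 1))
          ≤ ((a n + 1 : ℕ) : ℝ)^2 / c n := by
        intro n
        set G : ℕ := a n + 1 with hGdef
        set s : ℕ := k n / G with hsdef
        set p : ℝ := (l n : ℝ) * (1/2)^(l n) with hpdef
        have h2l : (0:ℝ) < 2^(l n) := by positivity
        have hlle : ((l n):ℝ) ≤ 2^(l n) := by exact_mod_cast (Nat.lt_two_pow_self (n := l n)).le
        have hq_eq : ((2^(l n) : ℝ) - (l n))/2^(l n) = 1 - p := by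
          rw [hpdef]
          field_simp
          rw [mul_sub, mul_one, mul_left_comm, ← mul_pow]; norm_num
        have hp0 : 0 < p := by
          rw [hpdef]
          have := hl n
          positivity
        have hp1 : p ≤ 1 := by
          rw [hpdef]
          rw [div_pow, one_pow]
          rw [mul_one_div, div_le_one h2l]
          exact hlle
        have hc_eq : c n = (k n : ℝ) * p := by rw [hcdef, hpdef]; ring
        rw [hq_eq]
        -- (1-p)^s ≤ 1 / (1 + s*p)
        have hq0 : (0:ℝ) ≤ 1 - p := by linarith
        have hspos : (0:ℝ) < 1 + s * p := by positivity
        have hqs : (1 - p)^s ≤ 1 / (1 + s * p) := by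
          rw [le_div_iff₀ hspos]
          calc (1-p)^s * (1 + s*p) ≤ (1-p)^s * (1+p)^s := by
                have := one_add_mul_le_pow (by linarith : (-2:ℝ) ≤ p) s
                have h0 : (0:ℝ) ≤ (1-p)^s := pow_nonneg hq0 s
                nlinarith [this, h0]
            _ = ((1-p)*(1+p))^s := by rw [mul_pow]
            _ ≤ 1 := by
                apply pow_le_one₀ (by nlinarith) (by nlinarith)
        have hGpos : (0:ℝ) < (G:ℝ) := by positivity
        have hcG : c n / G ≤ 1 + s * p := by
          have hkG : (k n : ℝ) < (s + 1) * G := by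
            have h1 := Nat.div_add_mod (k n) G
            have h2 := Nat.mod_lt (k n) (show 0 < G by omega)
            have h3 : (s+1)*G = G*s + G := by ring
            have : k n < (s+1)*G := by
              have h4 : (s+1)*G = G*(k n / G) + G := by rw [hsdef]; ring
              omega
            exact_mod_cast this
          have : (k n : ℝ) / G ≤ s + 1 := by
            rw [div_le_iff₀ hGpos]
            linarith
          calc c n / G = p * ((k n : ℝ)/G) := by rw [hc_eq]; ring
            _ ≤ p * (s+1) := by
                apply mul_le_mul_of_nonneg_left this hp0.le
            _ = s * p + p := by ring
            _ ≤ 1 + s * p := by linarith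
        calc (G:ℝ) * (1-p)^s ≤ (G:ℝ) * (1 / (1 + s*p)) :=
              mul_le_mul_of_nonneg_left hqs hGpos.le
          _ = (G:ℝ) / (1 + s*p) := by ring
          _ ≤ (G:ℝ) / (c n / G) := by
              apply div_le_div_of_nonneg_left hGpos.le ?_ hcG
              exact div_pos (hc_pos n) hGpos
          _ = (G:ℝ)^2 / c n := by
              field_simp
      -- then, G^2/c ≤ 4/sqrt c eventually
      have hev : ∀ᶠ n in atTop, ((a n + 1 : ℕ) : ℝ)^2 / c n ≤ 4 / Real.sqrt (c n) := by
        filter_upwards [h2.eventually_ge_atTop 16] with n hc16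
        have hcpos := hc_pos n
        have hssc : ((Nat.sqrt (Nat.sqrt ⌊c n⌋₊) : ℝ)) ≤ Real.sqrt (Real.sqrt (c n)) := by
          rw [Real.le_sqrt (by positivity) (by positivity)]
          have h1 : ((Nat.sqrt (Nat.sqrt ⌊c n⌋₊) : ℝ))^2 ≤ (Nat.sqrt ⌊c n⌋₊ : ℝ) := by
            exact_mod_cast Nat.sqrt_le' (Nat.sqrt ⌊c n⌋₊)
          refine le_trans h1 ?_
          rw [Real.le_sqrt (by positivity) (by positivity)]
          have h2' : ((Nat.sqrt ⌊c n⌋₊ : ℝ))^2 ≤ (⌊c n⌋₊ : ℝ) := by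
            exact_mod_cast Nat.sqrt_le' (⌊c n⌋₊)
          exact le_trans h2' (Nat.floor_le hcpos.le)
        have hG_le : ((a n + 1 : ℕ) : ℝ) ≤ Real.sqrt (Real.sqrt (c n)) + 2 := by
          have hnat : a n ≤ Nat.sqrt (Nat.sqrt ⌊c n⌋₊) + 1 := by
            rw [hadef]
            exact max_le (Nat.le_succ _) (Nat.succ_le_succ (Nat.zero_le _))
          have hcast : ((a n : ℕ) : ℝ) ≤ (Nat.sqrt (Nat.sqrt ⌊c n⌋₊) : ℝ) + 1 := by
            exact_mod_cast hnat
          push_cast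
          linarith [hssc]
        have hsqc : (2:ℝ) ≤ Real.sqrt (Real.sqrt (c n)) := by
          have : ((16:ℝ)) ≤ c n := hc16
          have h4 : Real.sqrt 16 ≤ Real.sqrt (c n) := Real.sqrt_le_sqrt this
          have h16 : Real.sqrt (16:ℝ) = 4 := by
            rw [show (16:ℝ) = 4^2 by norm_num, Real.sqrt_sq (by norm_num)]
          have h5 : (4:ℝ) ≤ Real.sqrt (c n) := by rw [← h16]; exact h4
          have h6 : Real.sqrt 4 ≤ Real.sqrt (Real.sqrt (c n)) := by
            apply Real.sqrt_le_sqrt; linarith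
          have h44 : (2:ℝ) ≤ Real.sqrt 4 := by
            rw [show (4:ℝ) = 2^2 by norm_num, Real.sqrt_sq (by norm_num)]
          linarith
        have hGsq : ((a n + 1 : ℕ) : ℝ)^2 ≤ 4 * Real.sqrt (c n) := by
          have hG2 : ((a n + 1 : ℕ) : ℝ) ≤ 2 * Real.sqrt (Real.sqrt (c n)) := by
            linarith
          have hGnn : (0:ℝ) ≤ ((a n + 1 : ℕ) : ℝ) := by positivity
          have := mul_self_le_mul_self hGnn hG2
          have hsq : Real.sqrt (Real.sqrt (c n)) * Real.sqrt (Real.sqrt (c n))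
              = Real.sqrt (c n) := Real.mul_self_sqrt (Real.sqrt_nonneg _)
          calc ((a n + 1 : ℕ) : ℝ)^2 = ((a n + 1 : ℕ) : ℝ) * ((a n + 1 : ℕ) : ℝ) := sq _
            _ ≤ (2 * Real.sqrt (Real.sqrt (c n))) * (2 * Real.sqrt (Real.sqrt (c n))) := this
            _ = 4 * (Real.sqrt (Real.sqrt (c n)) * Real.sqrt (Real.sqrt (c n))) := by ring
            _ = 4 * Real.sqrt (c n) := by rw [hsq]
        rw [div_le_div_iff₀ hcpos (by positivity : (0:ℝ) < Real.sqrt (c n))]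
        calc ((a n + 1 : ℕ) : ℝ)^2 * Real.sqrt (c n) ≤ (4 * Real.sqrt (c n)) * Real.sqrt (c n) := by
              apply mul_le_mul_of_nonneg_right hGsq (Real.sqrt_nonneg _)
          _ = 4 * (Real.sqrt (c n) * Real.sqrt (c n)) := by ring
          _ = 4 * c n := by rw [Real.mul_self_sqrt hcpos.le]
      -- combine
      apply squeeze_zero' ?_ ?_ (tendsto_four_div_sqrt.comp h2)
      · filter_upwards with n
        have h2l : (0:ℝ) < 2^(l n) := by positivity
        have hlle : ((l n):ℝ) ≤ 2^(l n) := by exact_mod_cast (Nat.lt_two_pow_self (n := l n)).le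
        apply mul_nonneg (by positivity)
        exact pow_nonneg (div_nonneg (by linarith) h2l.le) _
      · filter_upwards [hev] with n hn
        exact le_trans (hptwise n) hn
    -- conclude
    have hcompl : ∀ n, unifProb (fun ω : Cube (Fin (k n) × Fin (l n)) =>
        a n < (pivSet (gfun (h n)) ω).card)
        = 1 - unifProb (fun ω : Cube (Fin (k n) × Fin (l n)) =>
            ¬ (a n < (pivSet (gfun (h n)) ω).card)) := by
      intro n
      rw [unifProb_not]
      ring
    have hF0 : Tendsto (fun n => (1 - (1 - (1/2 : ℝ)^(l n))^(k n))) atTop (nhds 0) := by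
      have := (tendsto_const_nhds (x := (1:ℝ)) (f := atTop)).sub h1
      simpa using this
    have hbad : Tendsto (fun n => unifProb (fun ω : Cube (Fin (k n) × Fin (l n)) =>
        ¬ (a n < (pivSet (gfun (h n)) ω).card))) atTop (nhds 0) := by
      apply squeeze_zero (fun n => unifProb_nonneg _) key
      have := hF0.add ((htail0.const_mul (2:ℝ)))
      simpa using this
    have := (tendsto_const_nhds (x := (1:ℝ)) (f := atTop)).sub hbad
    rw [sub_zero] at this
    apply Tendsto.congr (fun n => (hcompl n).symm) this


/-- If `(1 - 2^{-l n})^{k n} → 1` and `k n · l n · 2^{-l n} → ∞`, then any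
sequence of monotone Boolean functions `h n` on `{-1,1}^{[k n]×[l n]}` is `o(1)`-close to a
sequence of monotone Boolean functions `g n` which has more than `a n` pivotals with
probability tending to `1`, for some positive integers `a n → ∞`. -/
theorem stmt17 (l k : ℕ → ℕ) (hl : ∀ n, 0 < l n) (hk : ∀ n, 0 < k n)
    (h1 : Tendsto (fun n => (1 - (1 / 2 : ℝ) ^ l n) ^ k n) atTop (nhds 1))
    (h2 : Tendsto (fun n => (k n : ℝ) * (l n : ℝ) * (1 / 2 : ℝ) ^ l n) atTop atTop)
    (h : (n : ℕ) → Cube (Fin (k n) × Fin (l n)) → Bool)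
    (hmono : ∀ n, Monotone (h n)) :
    ∃ g : (n : ℕ) → Cube (Fin (k n) × Fin (l n)) → Bool,
      (∀ n, Monotone (g n)) ∧
      Tendsto (fun n =>
          unifProb (fun ω : Cube (Fin (k n) × Fin (l n)) => g n ω ≠ h n ω))
        atTop (nhds 0) ∧
      ∃ a : ℕ → ℕ, (∀ n, 0 < a n) ∧ Tendsto a atTop atTop ∧
        Tendsto (fun n =>
            unifProb (fun ω : Cube (Fin (k n) × Fin (l n)) =>
              a n < (pivSet (g n) ω).card))
          atTop (nhds 1) := by
  exact stmt17' l k hl hk h1 h2 h hmono
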